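/- Let n ≥ 1, let x₁, …, x_n be nonzero complex numbers, and let x = diag(x₁, …, x_n, x_n⁻¹, …, x₁⁻¹) ∈ GL_{2n}(ℂ). Let J ∈ GL_{2n}(ℂ) be the antidiagonal matrix with entries J_{i,2n+1−i} = 1 and all other entries 0. Let 𝔩 be the complex vector space of strictly upper-triangular 2n×2n complex matrices. Then the linear map T : 𝔩 → 𝔩 given by T(X) = −J · ᵗ(x X x⁻¹) · J is well defined (it maps 𝔩 into itself), and det(id_𝔩 − T) = Π_{i=1}^{n} (1 + x_i²) · Π_{1≤i<j≤n} (1 − x_i² x_j⁻²) · Π_{1≤i<j≤n} (1 − x_i² x_j²). -/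

import Mathlib

open Matrix

/-- The antidiagonal matrix `J` of size `m`, with `J_{i, m+1-i} = 1` (1-indexed). -/
def Jmat (m : ℕ) : Matrix (Fin m) (Fin m) ℂ :=
  Matrix.of fun i j => if (i : ℕ) + (j : ℕ) = m - 1 then 1 else 0

/-- The entries `(x₁, …, x_n, x_n⁻¹, …, x₁⁻¹)` of the diagonal matrix `x`. -/
noncomputable def diagEntries (n : ℕ) (xv : Fin n → ℂ) (i : Fin (2 * n)) : ℂ :=
  if h : (i : ℕ) < n then xv ⟨i, h⟩
  else (xv ⟨2 * n - 1 - i, by have := i.isLt; omega⟩)⁻¹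

/-- The space `𝔩` of strictly upper-triangular `m × m` complex matrices. -/
noncomputable def strictUpper (m : ℕ) : Submodule ℂ (Matrix (Fin m) (Fin m) ℂ) where
  carrier := {X | ∀ i j : Fin m, j ≤ i → X i j = 0}
  add_mem' := by
    intro X Y hX hY i j hij
    simp [Matrix.add_apply, hX i j hij, hY i j hij]
  zero_mem' := by intro i j hij; simp
  smul_mem' := by
    intro c X hX i j hij
    simp [Matrix.smul_apply, hX i j hij]

/-- The linear endomorphism `T(X) = −J ᵗ(x X x⁻¹) J` of the space of `2n × 2n`
complex matrices. -/
noncomputable def Tlin (n : ℕ) (xv : Fin n → ℂ) :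
    Matrix (Fin (2 * n)) (Fin (2 * n)) ℂ →ₗ[ℂ] Matrix (Fin (2 * n)) (Fin (2 * n)) ℂ where
  toFun X :=
    -(Jmat (2 * n) *
        (Matrix.diagonal (diagEntries n xv) * X * (Matrix.diagonal (diagEntries n xv))⁻¹)ᵀ *
        Jmat (2 * n))
  map_add' X Y := by
    simp only [Matrix.mul_add, Matrix.add_mul, Matrix.transpose_add, neg_add]
  map_smul' c X := by
    simp [Matrix.mul_smul, Matrix.smul_mul, Matrix.transpose_smul]

namespace DOST

lemma val_rev {m : ℕ} (i : Fin m) : (i.rev : ℕ) = m - 1 - i := by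
  rw [Fin.val_rev]; omega

lemma mem_strictUpper {m : ℕ} (X : Matrix (Fin m) (Fin m) ℂ) :
    X ∈ strictUpper m ↔ ∀ i j : Fin m, j ≤ i → X i j = 0 := Iff.rfl

variable {n : ℕ}

lemma diagEntries_rev (xv : Fin n → ℂ) (i : Fin (2*n)) :
    diagEntries n xv i.rev = (diagEntries n xv i)⁻¹ := by
  have hrev : (i.rev : ℕ) = 2*n - 1 - i := val_rev i
  have hi := i.isLt
  unfold diagEntries
  by_cases h : (i:ℕ) < n
  · rw [dif_neg (by omega), dif_pos h]
    refine congrArg (fun t => (xv t)⁻¹) (Fin.ext ?_)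
    simp only []
    omega
  · rw [dif_pos (by omega : (i.rev:ℕ) < n), dif_neg h, inv_inv]
    congr 1
    exact Fin.ext (by simpa [hrev])

lemma Jmat_mul_apply {m : ℕ} (Z : Matrix (Fin m) (Fin m) ℂ) (a b : Fin m) :
    (Jmat m * Z) a b = Z a.rev b := by
  have ha := a.isLt
  simp only [Matrix.mul_apply, Jmat, Matrix.of_apply, ite_mul, one_mul, zero_mul]
  rw [Finset.sum_eq_single a.rev]
  · rw [if_pos (by rw [val_rev]; omega)]
  · intro k _ hk
    exact if_neg (fun h => hk (Fin.ext (by rw [val_rev]; omega)))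
  · simp

lemma mul_Jmat_apply {m : ℕ} (Z : Matrix (Fin m) (Fin m) ℂ) (a b : Fin m) :
    (Z * Jmat m) a b = Z a b.rev := by
  have hb := b.isLt
  simp only [Matrix.mul_apply, Jmat, Matrix.of_apply, mul_ite, mul_one, mul_zero]
  rw [Finset.sum_eq_single b.rev]
  · rw [if_pos (by rw [val_rev]; omega)]
  · intro k _ hk
    exact if_neg (fun h => hk (Fin.ext (by rw [val_rev]; omega)))
  · simp

lemma diagEntries_ne_zero (xv : Fin n → ℂ) (hx : ∀ i, xv i ≠ 0) (i : Fin (2*n)) :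
    diagEntries n xv i ≠ 0 := by
  unfold diagEntries
  split
  · exact hx _
  · exact inv_ne_zero (hx _)

lemma Tlin_apply (xv : Fin n → ℂ) (hx : ∀ i, xv i ≠ 0) (X : Matrix (Fin (2*n)) (Fin (2*n)) ℂ) (a b : Fin (2*n)) :
    Tlin n xv X a b
      = -(diagEntries n xv b.rev * X b.rev a.rev * (diagEntries n xv a.rev)⁻¹) := by
  have hinv : (Matrix.diagonal (diagEntries n xv))⁻¹
      = Matrix.diagonal (fun i => (diagEntries n xv i)⁻¹) := by
    refine Matrix.inv_eq_right_inv ?_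
    rw [Matrix.diagonal_mul_diagonal]
    have : ∀ i, diagEntries n xv i * (diagEntries n xv i)⁻¹ = 1 :=
      fun i => mul_inv_cancel₀ (diagEntries_ne_zero xv hx i)
    simp [this]
  simp only [Tlin, LinearMap.coe_mk, AddHom.coe_mk, Matrix.neg_apply, neg_inj]
  rw [mul_Jmat_apply, Jmat_mul_apply, Matrix.transpose_apply, hinv,
    Matrix.mul_diagonal, Matrix.diagonal_mul]

lemma Tpres (xv : Fin n → ℂ) (hx : ∀ i, xv i ≠ 0) :
    ∀ X ∈ strictUpper (2 * n), Tlin n xv X ∈ strictUpper (2 * n) := by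
  intro X hX i j hij
  rw [Tlin_apply xv (fun i => hx i), hX _ _ (Fin.rev_le_rev.mpr hij)]
  simp



abbrev Pt (m : ℕ) := {p : Fin m × Fin m // p.1 < p.2}
abbrev Qt (n : ℕ) := {q : Fin n × Fin n // q.1 < q.2}

noncomputable def equivFun (m : ℕ) : strictUpper m ≃ₗ[ℂ] (Pt m → ℂ) where
  toFun X p := X.1 p.1.1 p.1.2
  map_add' X Y := rfl
  map_smul' c X := rfl
  invFun f := ⟨Matrix.of fun i j => if h : i < j then f ⟨(i, j), h⟩ else 0, by
    intro i j hij
    exact dif_neg (fun h => absurd hij h.not_ge)⟩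
  left_inv X := by
    apply Subtype.ext
    ext i j
    by_cases h : i < j
    · simp [h]
    · simp only [Matrix.of_apply, dif_neg h]
      exact (X.2 i j (le_of_not_gt h)).symm
  right_inv f := by
    funext p
    simp [p.2]

noncomputable def bP (m : ℕ) : Module.Basis (Pt m) ℂ (strictUpper m) := Module.Basis.ofEquivFun (equivFun m)

def sigmaP {m : ℕ} (q : Pt m) : Pt m := ⟨(q.1.2.rev, q.1.1.rev), Fin.rev_lt_rev.mpr q.2⟩

lemma sigmaP_sigmaP {m : ℕ} (q : Pt m) : sigmaP (sigmaP q) = q := by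
  apply Subtype.ext
  simp [sigmaP, Fin.rev_rev]

variable {n : ℕ}

noncomputable def cP (xv : Fin n → ℂ) (q : Pt (2*n)) : ℂ :=
  diagEntries n xv q.1.1 * (diagEntries n xv q.1.2)⁻¹

lemma bP_entry {m : ℕ} (q : Pt m) (i j : Fin m) :
    ((bP m q : strictUpper m) : Matrix (Fin m) (Fin m) ℂ) i j
      = if h : i < j then (if (⟨(i, j), h⟩ : Pt m) = q then 1 else 0) else 0 := by
  simp only [bP, Module.Basis.coe_ofEquivFun, equivFun, LinearEquiv.coe_symm_mk]
  by_cases h : i < j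
  · simp [Matrix.of_apply, dif_pos h, Pi.single_apply]
  · simp [Matrix.of_apply, dif_neg h]

lemma Mmat_apply (xv : Fin n → ℂ) (hx : ∀ i, xv i ≠ 0)
    (h : ∀ X ∈ strictUpper (2 * n), Tlin n xv X ∈ strictUpper (2 * n)) (p q : Pt (2*n)) :
    LinearMap.toMatrix (bP (2*n)) (bP (2*n))
        (LinearMap.id - (Tlin n xv).restrict h) p q
      = (if p = q then 1 else 0) + (if p = sigmaP q then cP xv q else 0) := by
  rw [LinearMap.toMatrix_apply]
  rw [LinearMap.sub_apply, LinearMap.id_apply, map_sub]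
  simp only [Finsupp.coe_sub, Pi.sub_apply, Module.Basis.ofEquivFun_repr_apply, bP]
  have hrepr : ∀ (Y : strictUpper (2*n)) (r : Pt (2*n)),
      equivFun (2*n) Y r = (Y : Matrix (Fin (2*n)) (Fin (2*n)) ℂ) r.1.1 r.1.2 := fun _ _ => rfl
  rw [hrepr, hrepr]
  have h1 : ((Module.Basis.ofEquivFun (equivFun (2*n)) q : strictUpper (2*n)) :
      Matrix (Fin (2*n)) (Fin (2*n)) ℂ) p.1.1 p.1.2 = if p = q then 1 else 0 := by
    rw [show (Module.Basis.ofEquivFun (equivFun (2*n))) = bP (2*n) from rfl, bP_entry, dif_pos p.2]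
  have h2 : (((Tlin n xv).restrict h (Module.Basis.ofEquivFun (equivFun (2*n)) q) : strictUpper (2*n)) :
      Matrix (Fin (2*n)) (Fin (2*n)) ℂ) p.1.1 p.1.2
      = if p = sigmaP q then -(cP xv q) else 0 := by
    rw [LinearMap.restrict_coe_apply]
    rw [Tlin_apply xv hx]
    rw [show (Module.Basis.ofEquivFun (equivFun (2*n))) = bP (2*n) from rfl, bP_entry,
      dif_pos (Fin.rev_lt_rev.mpr p.2)]
    have hsp : (⟨((p : Fin (2*n) × Fin (2*n)).2.rev, (p : Fin (2*n) × Fin (2*n)).1.rev),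
        Fin.rev_lt_rev.mpr p.2⟩ : Pt (2*n)) = sigmaP p := Subtype.ext rfl
    rw [hsp]
    by_cases hcond : p = sigmaP q
    · rw [if_pos (show sigmaP p = q by rw [hcond, sigmaP_sigmaP]), if_pos hcond, mul_one,
        hcond]
      simp only [sigmaP, cP, Fin.rev_rev]
    · rw [if_neg (fun h' => hcond (by rw [← h', sigmaP_sigmaP])), if_neg hcond]
      ring_nf
  rw [h1, h2]
  split_ifs <;> ring



section Comb
variable {n : ℕ}

def emb (n : ℕ) : Fin n → Fin (2*n) := Fin.castLE (by omega)

@[simp] lemma emb_val (i : Fin n) : (emb n i : ℕ) = i := rfl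

def pfix (i : Fin n) : Pt (2*n) :=
  ⟨(emb n i, (emb n i).rev), by
    have := i.isLt
    rw [Fin.lt_def, val_rev]
    simp only [emb_val]
    omega⟩

def pA0 (q : Qt n) : Pt (2*n) :=
  ⟨(emb n q.1.1, emb n q.1.2), by
    have := Fin.lt_def.mp q.2
    rw [Fin.lt_def]
    simp only [emb_val]
    omega⟩

def pA1 (q : Qt n) : Pt (2*n) :=
  ⟨((emb n q.1.2).rev, (emb n q.1.1).rev), Fin.rev_lt_rev.mpr (pA0 q).2⟩

def pB0 (q : Qt n) : Pt (2*n) :=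
  ⟨(emb n q.1.1, (emb n q.1.2).rev), by
    have h1 := Fin.lt_def.mp q.2
    have h2 := q.1.1.isLt
    have h3 := q.1.2.isLt
    rw [Fin.lt_def, val_rev]
    simp only [emb_val]
    omega⟩

def pB1 (q : Qt n) : Pt (2*n) :=
  ⟨(emb n q.1.2, (emb n q.1.1).rev), by
    have h1 := Fin.lt_def.mp q.2
    have h2 := q.1.1.isLt
    have h3 := q.1.2.isLt
    rw [Fin.lt_def, val_rev]
    simp only [emb_val]
    omega⟩

abbrev It (n : ℕ) := Fin n ⊕ Fin 2 × (Qt n ⊕ Qt n)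

def psiF : It n → Pt (2*n)
  | .inl i => pfix i
  | .inr (⟨0, _⟩, .inl q) => pA0 q
  | .inr (_, .inl q) => pA1 q
  | .inr (⟨0, _⟩, .inr q) => pB0 q
  | .inr (_, .inr q) => pB1 q

lemma psiF_fix (i : Fin n) : psiF (.inl i) = pfix i := rfl
lemma psiF_A0 (h : (0:ℕ) < 2) (q : Qt n) : psiF (.inr (⟨0, h⟩, .inl q)) = pA0 q := rfl
lemma psiF_A1 (h : (1:ℕ) < 2) (q : Qt n) : psiF (.inr (⟨1, h⟩, .inl q)) = pA1 q := rfl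
lemma psiF_B0 (h : (0:ℕ) < 2) (q : Qt n) : psiF (.inr (⟨0, h⟩, .inr q)) = pB0 q := rfl
lemma psiF_B1 (h : (1:ℕ) < 2) (q : Qt n) : psiF (.inr (⟨1, h⟩, .inr q)) = pB1 q := rfl

def psiInv (p : Pt (2*n)) : It n :=
  if ha : (p.1.1 : ℕ) < n then
    if hb : (p.1.2 : ℕ) < n then
      .inr (0, .inl ⟨(⟨p.1.1, ha⟩, ⟨p.1.2, hb⟩), Fin.mk_lt_mk.mpr (Fin.lt_def.mp p.2)⟩)
    else
      if hab : (p.1.1 : ℕ) = 2*n - 1 - (p.1.2 : ℕ) then .inl ⟨p.1.1, ha⟩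
      else if hlt : (p.1.1 : ℕ) < 2*n - 1 - (p.1.2 : ℕ) then
        .inr (0, .inr ⟨(⟨p.1.1, ha⟩, ⟨2*n - 1 - (p.1.2 : ℕ), by
          have := p.1.2.isLt; omega⟩), Fin.mk_lt_mk.mpr hlt⟩)
      else
        .inr (1, .inr ⟨(⟨2*n - 1 - (p.1.2 : ℕ), by have := p.1.2.isLt; omega⟩,
          ⟨p.1.1, ha⟩), Fin.mk_lt_mk.mpr (by omega)⟩)
  else
    .inr (1, .inl ⟨(⟨2*n - 1 - (p.1.2 : ℕ), by
        have h1 := Fin.lt_def.mp p.2; have := p.1.2.isLt; omega⟩,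
      ⟨2*n - 1 - (p.1.1 : ℕ), by have h1 := Fin.lt_def.mp p.2; have := p.1.1.isLt; omega⟩),
      Fin.mk_lt_mk.mpr (by
        have h1 := Fin.lt_def.mp p.2; have := p.1.2.isLt; omega)⟩)

lemma psi_left : Function.LeftInverse (psiInv (n := n)) psiF := by
  rintro (i | ⟨⟨kv, hk⟩, q | q⟩)
  · -- pfix
    have hi := i.isLt
    have hval : ((pfix i).1.1 : ℕ) = i := rfl
    have hval2 : ((pfix i).1.2 : ℕ) = 2*n - 1 - i := by
      show ((emb n i).rev : ℕ) = _
      rw [val_rev]; rfl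
    rw [psiF_fix]
    unfold psiInv
    rw [dif_pos (by omega : ((pfix i).1.1 : ℕ) < n),
      dif_neg (by omega : ¬ ((pfix i).1.2 : ℕ) < n),
      dif_pos (by omega : ((pfix i).1.1 : ℕ) = 2*n - 1 - ((pfix i).1.2 : ℕ))]
    exact congrArg Sum.inl (Fin.ext (by rw [hval]))
  · -- type A
    rcases q with ⟨⟨a, b⟩, hab⟩
    have hab' : (a : ℕ) < b := Fin.lt_def.mp hab
    have hb := b.isLt
    have ha := a.isLt
    match kv, hk with
    | 0, hk =>
      rw [psiF_A0]
      unfold psiInv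
      have h1 : ((pA0 ⟨(a, b), hab⟩).1.1 : ℕ) = a := rfl
      have h2 : ((pA0 ⟨(a, b), hab⟩).1.2 : ℕ) = b := rfl
      rw [dif_pos (by omega), dif_pos (by omega)]
      refine congrArg Sum.inr (Prod.ext (Fin.ext rfl)
        (congrArg Sum.inl (Subtype.ext (Prod.ext ?_ ?_)))) <;>
        exact Fin.ext (by simp only [h1, h2])
    | 1, hk =>
      rw [psiF_A1]
      unfold psiInv
      have h1 : ((pA1 ⟨(a, b), hab⟩).1.1 : ℕ) = 2*n - 1 - b := by
        show ((emb n b).rev : ℕ) = _; rw [val_rev]; rfl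
      have h2 : ((pA1 ⟨(a, b), hab⟩).1.2 : ℕ) = 2*n - 1 - a := by
        show ((emb n a).rev : ℕ) = _; rw [val_rev]; rfl
      rw [dif_neg (by omega)]
      refine congrArg Sum.inr (Prod.ext (Fin.ext rfl)
        (congrArg Sum.inl (Subtype.ext (Prod.ext ?_ ?_)))) <;>
        exact Fin.ext (by simp only [h1, h2] <;> omega)
  · -- type B
    rcases q with ⟨⟨a, b⟩, hab⟩
    have hab' : (a : ℕ) < b := Fin.lt_def.mp hab
    have hb := b.isLt
    have ha := a.isLt
    match kv, hk with
    | 0, hk =>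
      rw [psiF_B0]
      unfold psiInv
      have h1 : ((pB0 ⟨(a, b), hab⟩).1.1 : ℕ) = a := rfl
      have h2 : ((pB0 ⟨(a, b), hab⟩).1.2 : ℕ) = 2*n - 1 - b := by
        show ((emb n b).rev : ℕ) = _; rw [val_rev]; rfl
      rw [dif_pos (by omega), dif_neg (by omega), dif_neg (by omega), dif_pos (by omega)]
      refine congrArg Sum.inr (Prod.ext (Fin.ext rfl)
        (congrArg Sum.inr (Subtype.ext (Prod.ext ?_ ?_)))) <;>
        exact Fin.ext (by simp only [h1, h2] <;> omega)
    | 1, hk =>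
      rw [psiF_B1]
      unfold psiInv
      have h1 : ((pB1 ⟨(a, b), hab⟩).1.1 : ℕ) = b := rfl
      have h2 : ((pB1 ⟨(a, b), hab⟩).1.2 : ℕ) = 2*n - 1 - a := by
        show ((emb n a).rev : ℕ) = _; rw [val_rev]; rfl
      rw [dif_pos (by omega), dif_neg (by omega), dif_neg (by omega), dif_neg (by omega)]
      refine congrArg Sum.inr (Prod.ext (Fin.ext rfl)
        (congrArg Sum.inr (Subtype.ext (Prod.ext ?_ ?_)))) <;>
        exact Fin.ext (by simp only [h1, h2] <;> omega)

lemma psi_right : Function.RightInverse (psiInv (n := n)) psiF := by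
  rintro ⟨⟨a, b⟩, hab⟩
  have hab' : (a : ℕ) < b := Fin.lt_def.mp hab
  have ha := a.isLt
  have hb := b.isLt
  unfold psiInv
  by_cases hA : (a : ℕ) < n
  · rw [dif_pos hA]
    by_cases hB : (b : ℕ) < n
    · rw [dif_pos hB]
      exact Subtype.ext (Prod.ext (Fin.ext rfl) (Fin.ext rfl))
    · rw [dif_neg hB]
      by_cases hab2 : (a : ℕ) = 2*n - 1 - (b : ℕ)
      · rw [dif_pos hab2]
        refine Subtype.ext (Prod.ext (Fin.ext rfl) (Fin.ext ?_))
        show ((emb n ⟨(a : ℕ), hA⟩).rev : ℕ) = b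
        rw [val_rev]; simp only [emb_val]; omega
      · rw [dif_neg hab2]
        by_cases hlt : (a : ℕ) < 2*n - 1 - (b : ℕ)
        · rw [dif_pos hlt]
          refine Subtype.ext (Prod.ext (Fin.ext rfl) (Fin.ext ?_))
          show ((emb n ⟨2*n - 1 - (b : ℕ), _⟩).rev : ℕ) = b
          rw [val_rev]; simp only [emb_val]; omega
        · rw [dif_neg hlt]
          refine Subtype.ext (Prod.ext (Fin.ext rfl) (Fin.ext ?_))
          show ((emb n ⟨2*n - 1 - (b : ℕ), _⟩).rev : ℕ) = b
          rw [val_rev]; simp only [emb_val]; omega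
  · rw [dif_neg hA]
    refine Subtype.ext (Prod.ext (Fin.ext ?_) (Fin.ext ?_))
    · show ((emb n ⟨2*n - 1 - (a : ℕ), _⟩).rev : ℕ) = a
      rw [val_rev]; simp only [emb_val]; omega
    · show ((emb n ⟨2*n - 1 - (b : ℕ), _⟩).rev : ℕ) = b
      rw [val_rev]; simp only [emb_val]; omega

def psi : It n ≃ Pt (2*n) := ⟨psiF, psiInv, psi_left, psi_right⟩

end Comb

section Blocks
variable {n : ℕ} (xv : Fin n → ℂ)

lemma d_emb (i : Fin n) : diagEntries n xv (emb n i) = xv i := by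
  unfold diagEntries
  rw [dif_pos (show ((emb n i : ℕ)) < n from i.isLt)]
  exact congrArg xv (Fin.ext rfl)

lemma d_emb_rev (i : Fin n) : diagEntries n xv (emb n i).rev = (xv i)⁻¹ := by
  rw [diagEntries_rev, d_emb]

lemma sigma_pfix (i : Fin n) : sigmaP (pfix i) = pfix i := by
  apply Subtype.ext
  simp [sigmaP, pfix, Fin.rev_rev]

lemma sigma_pA0 (q : Qt n) : sigmaP (pA0 q) = pA1 q := rfl

lemma sigma_pA1 (q : Qt n) : sigmaP (pA1 q) = pA0 q := by
  apply Subtype.ext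
  simp [sigmaP, pA1, pA0, Fin.rev_rev]

lemma sigma_pB0 (q : Qt n) : sigmaP (pB0 q) = pB1 q := by
  apply Subtype.ext
  simp [sigmaP, pB0, pB1, Fin.rev_rev]

lemma sigma_pB1 (q : Qt n) : sigmaP (pB1 q) = pB0 q := by
  apply Subtype.ext
  simp [sigmaP, pB0, pB1, Fin.rev_rev]

lemma cP_pfix (i : Fin n) : cP xv (pfix i) = xv i ^ 2 := by
  show diagEntries n xv (emb n i) * (diagEntries n xv (emb n i).rev)⁻¹ = _
  rw [d_emb, d_emb_rev, inv_inv, sq]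

lemma cP_pA0 (q : Qt n) : cP xv (pA0 q) = xv q.1.1 * (xv q.1.2)⁻¹ := by
  show diagEntries n xv (emb n q.1.1) * (diagEntries n xv (emb n q.1.2))⁻¹ = _
  rw [d_emb, d_emb]

lemma cP_pA1 (q : Qt n) : cP xv (pA1 q) = xv q.1.1 * (xv q.1.2)⁻¹ := by
  show diagEntries n xv (emb n q.1.2).rev * (diagEntries n xv (emb n q.1.1).rev)⁻¹ = _
  rw [d_emb_rev, d_emb_rev, inv_inv, mul_comm]

lemma cP_pB0 (q : Qt n) : cP xv (pB0 q) = xv q.1.1 * xv q.1.2 := by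
  show diagEntries n xv (emb n q.1.1) * (diagEntries n xv (emb n q.1.2).rev)⁻¹ = _
  rw [d_emb, d_emb_rev, inv_inv]

lemma cP_pB1 (q : Qt n) : cP xv (pB1 q) = xv q.1.1 * xv q.1.2 := by
  show diagEntries n xv (emb n q.1.2) * (diagEntries n xv (emb n q.1.1).rev)⁻¹ = _
  rw [d_emb, d_emb_rev, inv_inv, mul_comm]

noncomputable def cQ (r : Qt n ⊕ Qt n) : ℂ :=
  match r with
  | .inl q => xv q.1.1 * (xv q.1.2)⁻¹
  | .inr q => xv q.1.1 * xv q.1.2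

noncomputable def blk (r : Qt n ⊕ Qt n) : Matrix (Fin 2) (Fin 2) ℂ :=
  !![1, cQ xv r; cQ xv r, 1]

def flipI : It n → It n
  | .inl i => .inl i
  | .inr (k, r) => .inr (k.rev, r)

lemma rev0 (h : (0:ℕ) < 2) : (⟨0, h⟩ : Fin 2).rev = ⟨1, by omega⟩ := by
  apply Fin.ext; rw [val_rev]; rfl

lemma rev1 (h : (1:ℕ) < 2) : (⟨1, h⟩ : Fin 2).rev = ⟨0, by omega⟩ := by
  apply Fin.ext; rw [val_rev]; rfl

lemma sigma_psiF (u : It n) : sigmaP (psiF u) = psiF (flipI u) := by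
  rcases u with i | ⟨⟨kv, hk⟩, q | q⟩
  · rw [psiF_fix]; exact sigma_pfix i
  · match kv, hk with
    | 0, hk =>
      rw [psiF_A0, show flipI (.inr (⟨0, hk⟩, .inl q)) = .inr ((⟨0, hk⟩ : Fin 2).rev, .inl q) from rfl,
        rev0, psiF_A1]
      exact sigma_pA0 q
    | 1, hk =>
      rw [psiF_A1, show flipI (.inr (⟨1, hk⟩, .inl q)) = .inr ((⟨1, hk⟩ : Fin 2).rev, .inl q) from rfl,
        rev1, psiF_A0]
      exact sigma_pA1 q
  · match kv, hk with
    | 0, hk =>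
      rw [psiF_B0, show flipI (.inr (⟨0, hk⟩, .inr q)) = .inr ((⟨0, hk⟩ : Fin 2).rev, .inr q) from rfl,
        rev0, psiF_B1]
      exact sigma_pB0 q
    | 1, hk =>
      rw [psiF_B1, show flipI (.inr (⟨1, hk⟩, .inr q)) = .inr ((⟨1, hk⟩ : Fin 2).rev, .inr q) from rfl,
        rev1, psiF_B0]
      exact sigma_pB1 q

lemma cP_psiF (k : Fin 2) (r : Qt n ⊕ Qt n) :
    cP xv (psiF (.inr (k, r))) = cQ xv r := by
  rcases k with ⟨kv, hk⟩
  match kv, hk with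
  | 0, hk =>
    rcases r with q | q
    · rw [psiF_A0]; exact cP_pA0 xv q
    · rw [psiF_B0]; exact cP_pB0 xv q
  | 1, hk =>
    rcases r with q | q
    · rw [psiF_A1]; exact cP_pA1 xv q
    · rw [psiF_B1]; exact cP_pB1 xv q

lemma psiF_inj : Function.Injective (psiF (n := n)) := psi_left.injective

lemma Meq (hx : ∀ i, xv i ≠ 0)
    (h : ∀ X ∈ strictUpper (2 * n), Tlin n xv X ∈ strictUpper (2 * n)) :
    (LinearMap.toMatrix (bP (2*n)) (bP (2*n))
        (LinearMap.id - (Tlin n xv).restrict h)).submatrix (psiF (n := n)) (psiF (n := n))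
      = Matrix.fromBlocks (Matrix.diagonal (fun i : Fin n => 1 + xv i ^ 2)) 0 0
          (Matrix.blockDiagonal (blk xv)) := by
  have e0 : (0 : Fin 2).rev = 1 := by decide
  have e1 : (1 : Fin 2).rev = 0 := by decide
  ext u v
  rw [Matrix.submatrix_apply, Mmat_apply xv hx h, sigma_psiF]
  simp only [psiF_inj.eq_iff]
  rcases u with i | ⟨k, r⟩ <;> rcases v with j | ⟨k', r'⟩
  · simp only [flipI, Sum.inl.injEq, Matrix.fromBlocks_apply₁₁, psiF_fix, cP_pfix,
      Matrix.diagonal_apply]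
    by_cases hij : i = j <;> simp [hij]
  · simp [flipI]
  · simp [flipI]
  · simp only [flipI, Sum.inr.injEq, Prod.mk.injEq, Matrix.fromBlocks_apply₂₂,
      Matrix.blockDiagonal_apply, cP_psiF]
    by_cases hr : r = r'
    · subst hr
      fin_cases k <;> fin_cases k' <;>
        simp [blk, e0, e1, show (0 : Fin 2) ≠ 1 by decide, show (1 : Fin 2) ≠ 0 by decide]
    · simp [hr]

end Blocks

lemma prod_Qt {n : ℕ} (f : Fin n → Fin n → ℂ) :
    ∏ q : Qt n, f q.1.1 q.1.2
      = ∏ i : Fin n, ∏ j ∈ Finset.univ.filter (fun j => i < j), f i j := by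
  rw [← Finset.prod_subtype (Finset.univ.filter fun q : Fin n × Fin n => q.1 < q.2)
      (by simp) (fun q => f q.1 q.2)]
  rw [Finset.prod_filter, Fintype.prod_prod_type]
  refine Finset.prod_congr rfl fun i _ => ?_
  rw [Finset.prod_filter]

end DOST

/-- For nonzero `x₁, …, x_n` and `x = diag(x₁, …, x_n, x_n⁻¹, …, x₁⁻¹)`,
the map `T(X) = −J ᵗ(x X x⁻¹) J` preserves the space `𝔩` of strictly upper-triangular
`2n × 2n` matrices, and the determinant of `id − T` on `𝔩` is
`Π_i (1 + x_i²) · Π_{i<j} (1 − x_i²/x_j²) · Π_{i<j} (1 − x_i² x_j²)`. -/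
theorem det_one_sub_T
    (n : ℕ) (hn : 1 ≤ n) (xv : Fin n → ℂ) (hx : ∀ i, xv i ≠ 0) :
    ∃ h : ∀ X ∈ strictUpper (2 * n), Tlin n xv X ∈ strictUpper (2 * n),
      LinearMap.det (LinearMap.id - (Tlin n xv).restrict h) =
        (∏ i : Fin n, (1 + xv i ^ 2)) *
        (∏ i : Fin n, ∏ j ∈ Finset.univ.filter (fun j => i < j),
          (1 - xv i ^ 2 / xv j ^ 2)) *
        (∏ i : Fin n, ∏ j ∈ Finset.univ.filter (fun j => i < j),
          (1 - xv i ^ 2 * xv j ^ 2)) := by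
  refine ⟨DOST.Tpres xv hx, ?_⟩
  rw [← LinearMap.det_toMatrix (DOST.bP (2*n))]
  rw [← Matrix.det_submatrix_equiv_self (DOST.psi (n := n))]
  rw [show ⇑(DOST.psi (n := n)) = DOST.psiF from rfl]
  rw [DOST.Meq xv hx]
  rw [Matrix.det_fromBlocks_zero₂₁, Matrix.det_diagonal, Matrix.det_blockDiagonal]
  rw [Fintype.prod_sum_type]
  have hA : ∀ q : DOST.Qt n, (DOST.blk xv (Sum.inl q)).det
      = 1 - xv q.1.1 ^ 2 / xv q.1.2 ^ 2 := by
    intro q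
    rw [DOST.blk, Matrix.det_fin_two_of]
    simp only [DOST.cQ]
    rw [div_eq_mul_inv, ← inv_pow]
    ring
  have hB : ∀ q : DOST.Qt n, (DOST.blk xv (Sum.inr q)).det
      = 1 - xv q.1.1 ^ 2 * xv q.1.2 ^ 2 := by
    intro q
    rw [DOST.blk, Matrix.det_fin_two_of]
    simp only [DOST.cQ]
    ring
  simp only [hA, hB]
  rw [DOST.prod_Qt (fun a b => 1 - xv a ^ 2 / xv b ^ 2),
    DOST.prod_Qt (fun a b => 1 - xv a ^ 2 * xv b ^ 2)]
  ring
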